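/- Let X be a Polish space, 2 ≤ k ≤ N, λ ∈ 𝒫_{1/N}(X), and x ∈ X. Then the mass that F_{N,k}(λ) assigns to the diagonal point (x,…,x) ∈ X^k factorizes as F_{N,k}(λ)({(x,…,x)}) = ( N^{k−1} / ∏_{j=1}^{k−1}(N−j) ) · λ({x}) · (λ({x}) − 1/N) · (λ({x}) − 2/N) ⋯ (λ({x}) − (k−1)/N). -/

import Mathlib

open MeasureTheory Filter Topology ENNReal

noncomputable section

namespace FiniteDeFinetti

variable {X : Type*}

/-- The symmetrization `S_N γ := (1/N!) ∑_{σ ∈ S_N} γ^σ` of a measure on `X^N`,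
where `γ^σ` is the pushforward of `γ` under the coordinate permutation induced by `σ`. -/
def symmetrize [MeasurableSpace X] (N : ℕ) (γ : Measure (Fin N → X)) :
    Measure (Fin N → X) :=
  (N.factorial : ℝ≥0∞)⁻¹ • ∑ σ : Equiv.Perm (Fin N), γ.map (fun x i => x (σ i))

/-- The `k`-point marginal `M_k γ` of a measure on `X^N` (projection on the first `k` coords). -/
def marginal [MeasurableSpace X] {k N : ℕ} (h : k ≤ N) (γ : Measure (Fin N → X)) :
    Measure (Fin k → X) :=
  γ.map (fun x i => x (Fin.castLE h i))

/-- `𝒫_sym(X^N)`: symmetric probability measures on `X^N`. -/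
def PsymSet [MeasurableSpace X] (N : ℕ) : Set (Measure (Fin N → X)) :=
  {γ | IsProbabilityMeasure γ ∧ γ = symmetrize N γ}

/-- `𝒫_{N-rep}(X^k)`: the `N`-representable `k`-plans. -/
def NRep [MeasurableSpace X] {k N : ℕ} (h : k ≤ N) : Set (Measure (Fin k → X)) :=
  {μ | ∃ γ : Measure (Fin N → X), γ ∈ PsymSet N ∧ μ = marginal h γ}

/-- Narrow (weak) convergence of a sequence of measures: convergence of integrals of all
bounded continuous functions. -/
def NarrowTendsto {Y : Type*} [MeasurableSpace Y] [TopologicalSpace Y]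
    (μs : ℕ → Measure Y) (μ : Measure Y) : Prop :=
  ∀ φ : BoundedContinuousFunction Y ℝ,
    Tendsto (fun n => ∫ y, φ y ∂(μs n)) atTop (𝓝 (∫ y, φ y ∂μ))

/-- The empirical measure `(1/N) ∑ δ_{x_i}`. -/
def empirical [MeasurableSpace X] (N : ℕ) (x : Fin N → X) : Measure X :=
  (N : ℝ≥0∞)⁻¹ • ∑ i, Measure.dirac (x i)

/-- Extreme point of a convex set of measures. -/
def IsExtremePt {Y : Type*} [MeasurableSpace Y] (C : Set (Measure Y)) (μ : Measure Y) : Prop :=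
  μ ∈ C ∧ ∀ μ1 ∈ C, ∀ μ2 ∈ C, ∀ t : ℝ≥0∞, 0 < t → t < 1 →
    μ = t • μ1 + (1 - t) • μ2 → μ1 = μ ∧ μ2 = μ

/-- The set `E_{N,k}` of marginals of symmetrized Dirac measures. -/
def ENk [MeasurableSpace X] {k N : ℕ} (h : k ≤ N) : Set (Measure (Fin k → X)) :=
  {μ | ∃ x : Fin N → X, μ = marginal h (symmetrize N (Measure.dirac x))}

/-- Borel σ-algebra on the space of probability measures with its narrow topology. -/
instance instMSPM {Y : Type*} [MeasurableSpace Y] [TopologicalSpace Y]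
    [OpensMeasurableSpace Y] : MeasurableSpace (ProbabilityMeasure Y) := borel _

lemma empirical_isProbabilityMeasure [MeasurableSpace X] {N : ℕ} (hN : 0 < N) (x : Fin N → X) :
    IsProbabilityMeasure (empirical N x) := by
  constructor
  simp only [empirical, Measure.smul_apply, smul_eq_mul]
  rw [Measure.finset_sum_apply]
  simp only [measure_univ, Finset.sum_const, Finset.card_univ, Fintype.card_fin, nsmul_eq_mul,
    mul_one]
  exact ENNReal.inv_mul_cancel (by exact_mod_cast hN.ne') (natCast_ne_top N)

/-- The empirical-measure map `Λ : X^N → 𝒫(X)`. -/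
def empPM [MeasurableSpace X] {N : ℕ} (hN : 0 < N) (x : Fin N → X) : ProbabilityMeasure X :=
  ⟨empirical N x, empirical_isProbabilityMeasure hN x⟩

/-- The set `𝒫_{1/N}(X)` of `1/N`-quantized probability measures (as probability measures). -/
def QuantizedPM [MeasurableSpace X] (N : ℕ) : Set (ProbabilityMeasure X) :=
  {lam | ∃ x : Fin N → X, (lam : Measure X) = empirical N x}

open Classical in
/-- The extremal `N`-representable `k`-plan `F_{N,k}(λ)` associated with a `1/N`-quantized
probability measure `λ = (1/N) ∑ δ_{x_i}`, namely `M_k S_N δ_{(x_1,…,x_N)}` (this does not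
depend on the chosen enumeration of the atoms of `λ` counted with multiplicity); junk value
`λ^{⊗k}` for non-quantized `λ`. -/
def FNk [MeasurableSpace X] {k N : ℕ} (h : k ≤ N) (lam : ProbabilityMeasure X) :
    Measure (Fin k → X) :=
  if hx : ∃ x : Fin N → X, (lam : Measure X) = empirical N x then
    marginal h (symmetrize N (Measure.dirac (Classical.choose hx)))
  else Measure.pi fun _ => (lam : Measure X)



namespace DiagAux

open Finset

lemma exists_perm_extend {k N : ℕ} (hkN : k ≤ N) (g : Fin k ↪ Fin N) :
    ∃ τ : Equiv.Perm (Fin N), ∀ i, τ (Fin.castLE hkN i) = g i := by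
  classical
  let e : Fin k ↪ Fin N := Fin.castLEEmb hkN
  let q : {a : Fin N // a ∈ Set.range e} ≃ {a : Fin N // a ∈ Set.range g} :=
    e.toEquivRange.symm.trans g.toEquivRange
  refine ⟨q.extendSubtype, fun i => ?_⟩
  have h1 : (Fin.castLE hkN i) ∈ Set.range e := ⟨i, rfl⟩
  rw [Equiv.extendSubtype_apply_of_mem q _ h1]
  show ((g.toEquivRange (e.toEquivRange.symm ⟨e i, _⟩)) : Fin N) = g i
  rw [Function.Embedding.toEquivRange_symm_apply_self]
  simp

lemma card_subtype_ge {k N : ℕ} (hkN : k ≤ N) :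
    Fintype.card {a : Fin N // k ≤ (a : ℕ)} = N - k := by
  have e : {a : Fin N // k ≤ (a : ℕ)} ≃ Fin (N - k) :=
    { toFun := fun a => ⟨(a : ℕ) - k, by omega⟩
      invFun := fun b => ⟨⟨k + b, by omega⟩, by simp⟩
      left_inv := fun a => by ext; simp; omega
      right_inv := fun b => by ext; simp }
  rw [Fintype.card_congr e, Fintype.card_fin]

lemma fiber_card_id {k N : ℕ} (hkN : k ≤ N) :
    (univ.filter fun σ : Equiv.Perm (Fin N) =>
        ∀ i : Fin k, σ (Fin.castLE hkN i) = Fin.castLE hkN i).card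
      = (N - k).factorial := by
  classical
  rw [← Fintype.card_subtype]
  have e1 : {σ : Equiv.Perm (Fin N) // ∀ i : Fin k, σ (Fin.castLE hkN i) = Fin.castLE hkN i}
      ≃ {σ : Equiv.Perm (Fin N) // ∀ a : Fin N, ¬ (k ≤ (a:ℕ)) → σ a = a} :=
    Equiv.subtypeEquivRight (by
      intro σ
      constructor
      · intro h a ha
        have := h ⟨(a:ℕ), by omega⟩
        simpa [Fin.castLE, Fin.ext_iff] using this
      · intro h i
        have hv : ((Fin.castLE hkN i : Fin N) : ℕ) = (i : ℕ) := rfl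
        exact h _ (by omega))
  rw [Fintype.card_congr e1,
    Fintype.card_congr (Equiv.Perm.subtypeEquivSubtypePerm (fun a : Fin N => k ≤ (a:ℕ))).symm,
    Fintype.card_perm, card_subtype_ge hkN]

lemma fiber_card {k N : ℕ} (hkN : k ≤ N) (g : Fin k ↪ Fin N) :
    (univ.filter fun σ : Equiv.Perm (Fin N) =>
        ∀ i : Fin k, σ (Fin.castLE hkN i) = g i).card = (N - k).factorial := by
  classical
  obtain ⟨τ, hτ⟩ := exists_perm_extend hkN g
  rw [← fiber_card_id hkN]
  apply Finset.card_nbij' (fun σ => τ⁻¹ * σ) (fun σ => τ * σ)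
  · intro σ hσ
    simp only [mem_coe, mem_filter, mem_univ, true_and] at hσ ⊢
    intro i
    rw [Equiv.Perm.mul_apply, hσ i, ← hτ i, Equiv.Perm.inv_def, Equiv.symm_apply_apply]
  · intro σ hσ
    simp only [mem_coe, mem_filter, mem_univ, true_and] at hσ ⊢
    intro i
    rw [Equiv.Perm.mul_apply, hσ i, hτ i]
  · intro σ _; simp [mul_assoc]
  · intro σ _; simp [mul_assoc]

lemma count_perm {k N : ℕ} (hkN : k ≤ N) (A : Finset (Fin N)) :
    (univ.filter fun σ : Equiv.Perm (Fin N) =>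
        ∀ i : Fin k, σ (Fin.castLE hkN i) ∈ A).card
      = A.card.descFactorial k * (N - k).factorial := by
  classical
  set S := univ.filter fun σ : Equiv.Perm (Fin N) => ∀ i : Fin k, σ (Fin.castLE hkN i) ∈ A
  set T : Finset (Fin k ↪ Fin N) := univ.filter fun g => ∀ i, g i ∈ A with hT
  have hmap : ∀ σ ∈ S, ((Fin.castLEEmb hkN).trans σ.toEmbedding) ∈ T := by
    intro σ hσ
    simp only [S, T, mem_filter, mem_univ, true_and] at hσ ⊢
    exact hσ
  rw [Finset.card_eq_sum_card_fiberwise hmap]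
  have hfib : ∀ g ∈ T,
      (S.filter fun σ => (Fin.castLEEmb hkN).trans σ.toEmbedding = g).card
        = (N - k).factorial := by
    intro g hg
    rw [← fiber_card hkN g]
    congr 1
    ext σ
    simp only [S, mem_filter, mem_univ, true_and]
    constructor
    · rintro ⟨_, h⟩ i
      rw [← h]; rfl
    · intro h
      have hfe : (Fin.castLEEmb hkN).trans σ.toEmbedding = g := by
        ext i; exact congrArg Fin.val (h i)
      refine ⟨fun i => ?_, hfe⟩
      rw [h i]
      simp only [T, mem_filter, mem_univ, true_and] at hg
      exact hg i
  rw [Finset.sum_congr rfl hfib, Finset.sum_const, smul_eq_mul]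
  congr 1
  have e2 : (Fin k ↪ ↥A) ≃ {g : Fin k ↪ Fin N // ∀ i, g i ∈ A} :=
    { toFun := fun f => ⟨f.trans (Function.Embedding.subtype _), fun i => (f i).2⟩
      invFun := fun g => ⟨fun i => ⟨g.1 i, g.2 i⟩, fun i j hij => by
        apply g.1.injective; simpa [Subtype.ext_iff] using hij⟩
      left_inv := fun f => by ext i; rfl
      right_inv := fun g => by ext i; rfl }
  have := Fintype.card_congr e2
  rw [Fintype.card_embedding_eq, Fintype.card_coe, Fintype.card_fin] at this
  rw [this, hT, Fintype.card_subtype]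

lemma desc_cast (m k : ℕ) :
    ((m.descFactorial k : ℕ) : ℝ) = ∏ j ∈ range k, ((m : ℝ) - (j : ℝ)) := by
  rcases le_or_gt k m with h | h
  · rw [Nat.descFactorial_eq_prod_range, Nat.cast_prod]
    refine Finset.prod_congr rfl fun j hj => ?_
    have hj' : j ≤ m := le_trans (le_of_lt (mem_range.mp hj)) h
    push_cast [Nat.cast_sub hj']
    ring
  · rw [Nat.descFactorial_eq_zero_iff_lt.mpr h, Nat.cast_zero]
    exact (Finset.prod_eq_zero (mem_range.mpr h) (by simp)).symm

lemma arith {k N m : ℕ} (hk : 2 ≤ k) (hkN : k ≤ N) :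
    ((m.descFactorial k * (N - k).factorial : ℕ) : ℝ) / (N.factorial : ℝ)
      = ((N : ℝ) ^ (k - 1) / ∏ j ∈ Finset.Icc 1 (k - 1), ((N : ℝ) - (j : ℝ))) *
          ∏ j ∈ Finset.range k, ((m : ℝ) / (N : ℝ) - (j : ℝ) / (N : ℝ)) := by
  have hN : 0 < N := lt_of_lt_of_le (by omega) hkN
  set d : ℝ := ∏ j ∈ range k, ((N : ℝ) - (j : ℝ)) with hd
  set Q : ℝ := ∏ j ∈ Icc 1 (k - 1), ((N : ℝ) - (j : ℝ)) with hQ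
  have hdQ : d = (N : ℝ) * Q := by
    have h1 : Icc 1 (k - 1) = Ico 1 k := by
      rw [← Finset.Ico_add_one_right_eq_Icc]
      congr 1
      omega
    rw [hd, hQ, h1, Finset.prod_Ico_eq_prod_range]
    have h2 : k = (k - 1) + 1 := by omega
    rw [h2, Finset.prod_range_succ']
    simp [add_comm, mul_comm]
  have hNfact : (N.factorial : ℝ) = ((N - k).factorial : ℝ) * d := by
    have := Nat.factorial_mul_descFactorial hkN
    have hcast : ((N.descFactorial k : ℕ) : ℝ) = d := by
      rw [desc_cast]
    rw [← this]
    push_cast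
    rw [hcast]
  have hdpos : ∀ j ∈ range k, (0:ℝ) < (N : ℝ) - (j : ℝ) := by
    intro j hj
    have : j < N := lt_of_lt_of_le (mem_range.mp hj) hkN
    have : (j : ℝ) < (N : ℝ) := by exact_mod_cast this
    linarith
  have hdne : d ≠ 0 := by
    rw [hd]
    exact Finset.prod_ne_zero_iff.mpr fun j hj => ne_of_gt (hdpos j hj)
  have hNne : (N : ℝ) ≠ 0 := by positivity
  have hQne : Q ≠ 0 := by
    intro h0
    apply hdne
    rw [hdQ, h0, mul_zero]
  have hFne : ((N - k).factorial : ℝ) ≠ 0 := by positivity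
  have hprod : ∏ j ∈ range k, ((m : ℝ) / (N : ℝ) - (j : ℝ) / (N : ℝ))
      = (∏ j ∈ range k, ((m : ℝ) - (j : ℝ))) / (N : ℝ) ^ k := by
    have h1 : ∏ j ∈ range k, ((m:ℝ)/(N:ℝ) - (j:ℝ)/(N:ℝ))
        = ∏ j ∈ range k, (((m:ℝ) - (j:ℝ))/(N:ℝ)) :=
      Finset.prod_congr rfl fun j _ => div_sub_div_same _ _ _
    rw [h1, Finset.prod_div_distrib, Finset.prod_const, Finset.card_range]
  have hpow : (N : ℝ) ^ k = (N : ℝ) ^ (k - 1) * (N : ℝ) := by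
    rw [← pow_succ]
    congr 1
    omega
  push_cast
  rw [desc_cast, hNfact, hprod, hdQ, hpow]
  field_simp

end DiagAux

/-- factorization on the diagonal. For `2 ≤ k ≤ N`, `λ ∈ 𝒫_{1/N}(X)` and
`x ∈ X`, `F_{N,k}(λ)({(x,…,x)}) = (N^{k−1}/∏_{j=1}^{k−1}(N−j)) · λ({x})·(λ({x})−1/N)⋯(λ({x})−(k−1)/N)`. -/
theorem FNk_diagonal_factorization
    {X : Type*} [MeasurableSpace X] [TopologicalSpace X] [PolishSpace X] [BorelSpace X]
    {k N : ℕ} (hk : 2 ≤ k) (hkN : k ≤ N)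
    (lam : ProbabilityMeasure X) (hlam : lam ∈ QuantizedPM (X := X) N) (x : X) :
    ((FNk (X := X) hkN lam) {fun _ : Fin k => x}).toReal
      = ((N : ℝ) ^ (k - 1) / ∏ j ∈ Finset.Icc 1 (k - 1), ((N : ℝ) - (j : ℝ))) *
          ∏ j ∈ Finset.range k, (((lam : Measure X) {x}).toReal - (j : ℝ) / (N : ℝ)) := by
  classical
  have hx : ∃ z : Fin N → X, (lam : Measure X) = empirical N z := hlam
  set y := Classical.choose hx with hy0
  have hy : (lam : Measure X) = empirical N y := Classical.choose_spec hx
  have hFNk : FNk (X := X) hkN lam = marginal hkN (symmetrize N (Measure.dirac y)) := by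
    rw [FNk, dif_pos hx]
  -- the count
  set A : Finset (Fin N) := Finset.univ.filter fun i => y i = x with hA
  set m : ℕ := A.card with hm
  -- measure of the diagonal singleton
  have hproj : Measurable fun (z : Fin N → X) (i : Fin k) => z (Fin.castLE hkN i) :=
    measurable_pi_lambda _ fun i => measurable_pi_apply _
  have hLHS : ((FNk (X := X) hkN lam) {fun _ : Fin k => x}).toReal
      = ((m.descFactorial k * (N - k).factorial : ℕ) : ℝ) / (N.factorial : ℝ) := by
    rw [hFNk, marginal, Measure.map_apply hproj (measurableSet_singleton _),
      symmetrize, Measure.smul_apply, Measure.finset_sum_apply]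
    have hterm : ∀ σ : Equiv.Perm (Fin N),
        (Measure.dirac y).map (fun z (i : Fin N) => z (σ i))
          ((fun (z : Fin N → X) (i : Fin k) => z (Fin.castLE hkN i)) ⁻¹' {fun _ : Fin k => x})
        = if (∀ i : Fin k, σ (Fin.castLE hkN i) ∈ A) then 1 else 0 := by
      intro σ
      rw [Measure.map_dirac' (measurable_pi_lambda _ fun i => measurable_pi_apply _),
        Measure.dirac_apply]
      simp only [Set.indicator_apply, Set.mem_preimage, Set.mem_singleton_iff, funext_iff,
        Pi.one_apply, hA, Finset.mem_filter, Finset.mem_univ, true_and]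
    rw [Finset.sum_congr rfl fun σ _ => hterm σ, Finset.sum_boole, smul_eq_mul,
      ENNReal.toReal_mul, ENNReal.toReal_inv, ENNReal.toReal_natCast, ENNReal.toReal_natCast,
      DiagAux.count_perm hkN A, ← hm]
    ring
  have hlamx : ((lam : Measure X) {x}).toReal = (m : ℝ) / (N : ℝ) := by
    rw [hy, empirical, Measure.smul_apply, Measure.finset_sum_apply]
    have hterm : ∀ i : Fin N, Measure.dirac (y i) {x} = if y i ∈ ({x} : Set X) then 1 else 0 := by
      intro i
      rw [Measure.dirac_apply]
      simp [Set.indicator_apply]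
    rw [Finset.sum_congr rfl fun i _ => hterm i, Finset.sum_boole, smul_eq_mul,
      ENNReal.toReal_mul, ENNReal.toReal_inv, ENNReal.toReal_natCast, ENNReal.toReal_natCast]
    have : (Finset.univ.filter fun i : Fin N => y i ∈ ({x} : Set X)) = A := by
      rw [hA]
      congr 1
    rw [this, ← hm]
    ring
  rw [hLHS, hlamx]
  exact DiagAux.arith hk hkN


end FiniteDeFinetti
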